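/- Let α be real with 1/2 < α ≤ 1/(2·P_lL) and define ξ̂(b) = Δ·(α − 1/2 + b/2) / ((P_lL·b + P_hL)·(P_lH·b + P_hH + 1)) for b ∈ [0, 1]. Then: (i) if α ≥ (1 + P_hL + P_hH·P_lL)/(2·(P_hH·P_lL + P_hL·P_lH + P_lL)), then for all b ∈ [0, 1], ξ̂(b) ≤ ξ̂(0) = Δ·(α − 1/2)/(P_hL·(P_hH + 1)); (ii) if (1 + P_hL + P_hH·P_lL)/(2·(P_hH·P_lL + P_hL·P_lH + P_lL)) > α > 1/(1 + P_lL + (P_lL − P_hH)), then b*(α) = (1 − 2α) + √(2·(1 − α·P_lH)·(1 − 2·α·P_lL)·P_lL·P_lH)/(P_lL·P_lH) lies in (0, 1), ξ̂(b*(α)) = ξ_NL(α), and ξ̂(b) ≤ ξ_NL(α) for all b ∈ [0, 1]; (iii) if α ≤ 1/(1 + P_lL + (P_lL − P_hH)), then for all b ∈ [0, 1], ξ̂(b) ≤ ξ̂(1) = (1/2)·Δ·α. -/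

import Mathlib

set_option maxHeartbeats 1000000

/-- ξ̂(b): the common value of ξ_h and ξ_l (at β_h^1 = 1) for the γ solving ξ_h = ξ_l. -/
noncomputable def xiHat (PhH PlH PhL PlL α b : ℝ) : ℝ :=
  (PhH - PhL) * (α - 1 / 2 + b / 2) /
    ((PlL * b + PhL) * (PlH * b + PhH + 1))

/-- b*(α): the maximizer of ξ̂ in the non-linear regime. -/
noncomputable def bStar (PlH PlL α : ℝ) : ℝ :=
  (1 - 2 * α) +
    Real.sqrt (2 * (1 - α * PlH) * (1 - 2 * α * PlL) * PlL * PlH) / (PlL * PlH)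

/-- ξ_NL(α): the non-linear segment of the threshold curve. -/
noncomputable def xiNL (PhH PlH PhL PlL α : ℝ) : ℝ :=
  (PhH - PhL) /
    (4 * Real.sqrt (2 * (1 - α * PlH) * (1 - 2 * α * PlL) * PlH * PlL)
      + 2 * PlH + 4 * PlL - 8 * α * PlH * PlL)

/-- maximization of ξ̂ over b ∈ [0, 1] in the three regimes of α. -/
theorem stmt_12 (PhH PlH PhL PlL α : ℝ)
    (hPhL : 0 < PhL) (hhh : PhL < PhH) (hHL : PhH ≤ PlL) (hPlL : PlL < 1)
    (hsH : PhH + PlH = 1) (hsL : PhL + PlL = 1)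
    (hα₁ : 1 / 2 < α) (hα₂ : α ≤ 1 / (2 * PlL)) :
    ((1 + PhL + PhH * PlL) / (2 * (PhH * PlL + PhL * PlH + PlL)) ≤ α →
      (∀ b : ℝ, 0 ≤ b → b ≤ 1 → xiHat PhH PlH PhL PlL α b ≤ xiHat PhH PlH PhL PlL α 0) ∧
      xiHat PhH PlH PhL PlL α 0 = (PhH - PhL) * (α - 1 / 2) / (PhL * (PhH + 1))) ∧
    (α < (1 + PhL + PhH * PlL) / (2 * (PhH * PlL + PhL * PlH + PlL)) →
      1 / (1 + PlL + (PlL - PhH)) < α →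
      (0 < bStar PlH PlL α ∧ bStar PlH PlL α < 1) ∧
      xiHat PhH PlH PhL PlL α (bStar PlH PlL α) = xiNL PhH PlH PhL PlL α ∧
      (∀ b : ℝ, 0 ≤ b → b ≤ 1 → xiHat PhH PlH PhL PlL α b ≤ xiNL PhH PlH PhL PlL α)) ∧
    (α ≤ 1 / (1 + PlL + (PlL - PhH)) →
      (∀ b : ℝ, 0 ≤ b → b ≤ 1 → xiHat PhH PlH PhL PlL α b ≤ xiHat PhH PlH PhL PlL α 1) ∧
      xiHat PhH PlH PhL PlL α 1 = (1 / 2) * (PhH - PhL) * α) := by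
  have hPlH : PlH = 1 - PhH := by linarith
  have hPhL' : PhL = 1 - PlL := by linarith
  subst hPlH hPhL'
  have hPlL2 : 1 / 2 < PlL := by linarith
  have hPhH1 : PhH < 1 := lt_of_le_of_lt hHL hPlL
  have hPlH0 : 0 < 1 - PhH := by linarith
  have hPlL0 : 0 < PlL := by linarith
  have hPhH0 : 0 < PhH := by linarith
  have hΔ : 0 < PhH - (1 - PlL) := by linarith
  have hα2' : α * (2 * PlL) ≤ 1 := (le_div_iff₀ (by positivity)).mp hα₂
  have hα1 : α < 1 := by nlinarith
  have hApos : 0 < PlL * (1 - PhH) := by positivity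
  have hd : ∀ b : ℝ, 0 ≤ b → 0 < (PlL * b + (1 - PlL)) * ((1 - PhH) * b + PhH + 1) := by
    intro b hb
    have h1 : 0 < PlL * b + (1 - PlL) := by nlinarith
    have h2 : 0 < (1 - PhH) * b + PhH + 1 := by nlinarith
    positivity
  have hBpos : (0:ℝ) < 2 * (PhH * PlL + (1 - PlL) * (1 - PhH) + PlL) := by nlinarith
  have hZpos : (0:ℝ) < 1 + PlL + (PlL - PhH) := by linarith
  refine ⟨fun hA1 => ⟨fun b hb0 hb1 => ?_, ?_⟩, fun hA1 hA2 => ?_, fun hA3 => ?_⟩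
  · -- regime (i) inequality
    have hc : 1 + (1 - PlL) + PhH * PlL ≤ α * (2 * (PhH * PlL + (1 - PlL) * (1 - PhH) + PlL)) :=
      (div_le_iff₀ hBpos).mp hA1
    have hk : 0 ≤ (2 * α - 1) * (PlL * (PhH + 1) + (1 - PhH) * (1 - PlL)) - (1 - PlL) * (PhH + 1) := by
      nlinarith
    rw [xiHat, xiHat, div_le_div_iff₀ (hd b hb0) (hd 0 le_rfl)]
    nlinarith [mul_nonneg (mul_nonneg hΔ.le hb0) hk,
      mul_nonneg (mul_nonneg (mul_nonneg hΔ.le (by linarith : (0:ℝ) ≤ 2 * α - 1)) hApos.le) (sq_nonneg b)]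
  · rw [xiHat]
    rw [show (PlL * 0 + (1 - PlL)) * ((1 - PhH) * 0 + PhH + 1) = (1 - PlL) * (PhH + 1) by ring]
    ring_nf
  · -- regime (ii)
    set S := Real.sqrt (2 * (1 - α * (1 - PhH)) * (1 - 2 * α * PlL) * PlL * (1 - PhH)) with hSdef
    have hin : 0 ≤ 2 * (1 - α * (1 - PhH)) * (1 - 2 * α * PlL) * PlL * (1 - PhH) := by
      have h1 : 0 ≤ 2 * (1 - α * (1 - PhH)) := by nlinarith
      have h2 : (0:ℝ) ≤ 1 - 2 * α * PlL := by linarith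
      exact mul_nonneg (mul_nonneg (mul_nonneg h1 h2) hPlL0.le) hPlH0.le
    have hS2 : S ^ 2 = 2 * (1 - α * (1 - PhH)) * (1 - 2 * α * PlL) * PlL * (1 - PhH) :=
      Real.sq_sqrt hin
    have hSnn : 0 ≤ S := Real.sqrt_nonneg _
    have hreg1 : α * (2 * (PhH * PlL + (1 - PlL) * (1 - PhH) + PlL)) < 1 + (1 - PlL) + PhH * PlL :=
      (lt_div_iff₀ hBpos).mp hA1
    have hreg2 : 1 < α * (1 + PlL + (PlL - PhH)) := (div_lt_iff₀ hZpos).mp hA2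
    have hCB : 0 < (1 - PlL) * (PhH + 1) - (2 * α - 1) * (PlL * (PhH + 1) + (1 - PhH) * (1 - PlL)) := by
      nlinarith
    have hS_lb : (2 * α - 1) * (PlL * (1 - PhH)) < S := by
      have hsq : ((2 * α - 1) * (PlL * (1 - PhH))) ^ 2 < S ^ 2 := by
        rw [hS2]; linarith [mul_pos hApos hCB]
      exact lt_of_pow_lt_pow_left₀ 2 hSnn hsq
    have hS_ub : S < 2 * α * (PlL * (1 - PhH)) := by
      have hng1 : 0 < 2 * (α * ((1 - PhH) + 2 * PlL) - 1) := by nlinarith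
      have hsq : S ^ 2 < (2 * α * (PlL * (1 - PhH))) ^ 2 := by
        rw [hS2]; linarith [mul_pos hApos hng1]
      exact lt_of_pow_lt_pow_left₀ 2 (by positivity) hsq
    have hSpos : 0 < S := lt_trans (by nlinarith) hS_lb
    have hbpos : 0 < (1 - 2 * α) + S / (PlL * (1 - PhH)) := by
      have := (lt_div_iff₀ hApos).mpr hS_lb; linarith
    have hb0 : 0 < bStar (1 - PhH) PlL α := by rw [bStar, ← hSdef]; exact hbpos
    have hb1 : bStar (1 - PhH) PlL α < 1 := by
      rw [bStar, ← hSdef]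
      have := (div_lt_iff₀ hApos).mpr hS_ub; linarith
    have hDpos : 0 < 4 * S + 2 * (1 - PhH) + 4 * PlL - 8 * α * (1 - PhH) * PlL := by
      linarith [hSnn, mul_nonneg hPlH0.le (show (0:ℝ) ≤ 1 - 2 * α * PlL by linarith)]
    have hSarg : Real.sqrt (2 * (1 - α * (1 - PhH)) * (1 - 2 * α * PlL) * (1 - PhH) * PlL) = S := by
      rw [hSdef]; ring_nf
    refine ⟨⟨hb0, hb1⟩, ?_, ?_⟩
    · rw [xiHat, xiNL, bStar, ← hSdef, hSarg]
      have hAne : (PlL * (1 - PhH)) ≠ 0 := hApos.ne'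
      have e1 : α - 1 / 2 + ((1 - 2 * α) + S / (PlL * (1 - PhH))) / 2 = S / (2 * (PlL * (1 - PhH))) := by
        field_simp; ring
      have e2 : (PlL * ((1 - 2 * α) + S / (PlL * (1 - PhH))) + (1 - PlL)) *
          ((1 - PhH) * ((1 - 2 * α) + S / (PlL * (1 - PhH))) + PhH + 1) =
          (4 * S + 2 * (1 - PhH) + 4 * PlL - 8 * α * (1 - PhH) * PlL) * (S / (2 * (PlL * (1 - PhH)))) := by
        field_simp
        linear_combination (-2) * hS2
      rw [e1, e2, mul_div_mul_right _ _ (by positivity : S / (2 * (PlL * (1 - PhH))) ≠ 0)]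
    · intro b hbb0 hbb1
      rw [xiHat, xiNL, hSarg, div_le_div_iff₀ (hd b hbb0) (by linarith)]
      have key : (PlL * (1 - PhH)) * ((PhH - (1 - PlL)) * (α - 1 / 2 + b / 2) *
            (4 * S + 2 * (1 - PhH) + 4 * PlL - 8 * α * (1 - PhH) * PlL)) ≤
          (PlL * (1 - PhH)) * ((PhH - (1 - PlL)) *
            ((PlL * b + (1 - PlL)) * ((1 - PhH) * b + PhH + 1))) := by
        have hS2' : (PhH - (1 - PlL)) * S ^ 2 =
            (PhH - (1 - PlL)) * (2 * (1 - α * (1 - PhH)) * (1 - 2 * α * PlL) * PlL * (1 - PhH)) := by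
          rw [hS2]
        linarith [hS2', mul_nonneg hΔ.le (sq_nonneg (PlL * (1 - PhH) * (b + 2 * α - 1) - S))]
      exact le_of_mul_le_mul_left key hApos
  · -- regime (iii)
    have hc3 : α * (1 + PlL + (PlL - PhH)) ≤ 1 := (le_div_iff₀ hZpos).mp hA3
    constructor
    · intro b hb0 hb1
      have hg1 : 0 ≤ 2 - 2 * α * ((1 - PhH) + 2 * PlL) := by nlinarith
      rw [xiHat, xiHat, div_le_div_iff₀ (hd b hb0) (hd 1 zero_le_one)]
      nlinarith [mul_nonneg (mul_nonneg hΔ.le (by linarith : (0:ℝ) ≤ 1 - b)) hg1,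
        mul_nonneg (mul_nonneg (mul_nonneg hΔ.le (by linarith : (0:ℝ) ≤ 2 * α)) hApos.le) (sq_nonneg (1 - b))]
    · rw [xiHat]
      rw [show (PlL * 1 + (1 - PlL)) * ((1 - PhH) * 1 + PhH + 1) = 2 by ring]
      ring
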